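/- Let A : (ℝ/ℤ)² → (ℝ/ℤ)² be the automorphism of the 2-torus induced by the linear map (m, n) ↦ (2m + n, m + n), and let G : ℝ → ℝ be continuous, strictly increasing, with G(x+2) = G(x)+2 for all x, G(x) ≥ x for all x, and G(x) = x if and only if x ∈ ℤ, inducing the circle map g on ℝ/2ℤ. Then the product homeomorphism F : (ℝ/ℤ)² × (ℝ/2ℤ) → (ℝ/ℤ)² × (ℝ/2ℤ), F(x, a) = (A(x), g(a)), is chain transitive: for every ε > 0 and every pair of points P, Q in (ℝ/ℤ)² × (ℝ/2ℤ) there is an ε-chain from P to Q. -/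

import Mathlib

open Filter Topology Function

/-- `f` is chain transitive if for every `ε > 0` and every pair of points `a, b`
there is a finite ε-chain `x₀ = a, …, x_n = b` (with `n ≥ 1`) such that
`dist (f (x_i)) (x_{i+1}) < ε` for all `0 ≤ i ≤ n - 1`. -/
def ChainTransitive {X : Type*} [MetricSpace X] (f : X → X) : Prop :=
  ∀ ε > (0 : ℝ), ∀ a b : X, ∃ n ≥ 1, ∃ c : ℕ → X,
    c 0 = a ∧ c n = b ∧ ∀ i < n, dist (f (c i)) (c (i + 1)) < ε



noncomputable def CTφ : ℝ := (1 + Real.sqrt 5) / 2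
theorem CTφ_sq : CTφ ^ 2 = CTφ + 1 := by
  have h5 : Real.sqrt 5 ^ 2 = 5 := Real.sq_sqrt (by norm_num)
  unfold CTφ; nlinarith [h5]
theorem CTφ_gt_one : 1 < CTφ := by
  have h5 : Real.sqrt 5 ^ 2 = 5 := Real.sq_sqrt (by norm_num)
  have h5' : 0 ≤ Real.sqrt 5 := Real.sqrt_nonneg 5
  unfold CTφ; nlinarith
theorem CTφ_lt_two : CTφ < 2 := by
  have h5 : Real.sqrt 5 ^ 2 = 5 := Real.sq_sqrt (by norm_num)
  have h5' : 0 ≤ Real.sqrt 5 := Real.sqrt_nonneg 5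
  unfold CTφ; nlinarith

theorem CTφ_irrational : Irrational CTφ := by
  have h5 : Irrational (Real.sqrt 5) := (by norm_num : Nat.Prime 5).irrational_sqrt
  have h1 : Irrational (1 + Real.sqrt 5) := by
    simpa using h5.ratCast_add 1
  have := h1.div_intCast (m := 2) (by norm_num)
  simpa [CTφ] using this

theorem CT_coe_surj (p : ℝ) (z : AddCircle p) : ∃ x : ℝ, (x : AddCircle p) = z :=
  QuotientAddGroup.induction_on z fun x => ⟨x, rfl⟩

def ReachN {X : Type*} [MetricSpace X] (f : X → X) (ε : ℝ) (n : ℕ) (a b : X) : Prop :=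
  ∃ c : ℕ → X, c 0 = a ∧ c n = b ∧ ∀ i < n, dist (f (c i)) (c (i + 1)) < ε

theorem reachN_trans {X : Type*} [MetricSpace X] {f : X → X} {ε : ℝ} {n m : ℕ} {a b d : X}
    (h1 : ReachN f ε n a b) (h2 : ReachN f ε m b d) : ReachN f ε (n + m) a d := by
  obtain ⟨c, hc0, hcn, hc⟩ := h1
  obtain ⟨e, he0, hem, he⟩ := h2
  refine ⟨fun i => if i ≤ n then c i else e (i - n), by simp [hc0], ?_, ?_⟩
  · by_cases h : n + m ≤ n
    · have hm : m = 0 := by omega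
      subst hm
      simp only [Nat.add_zero]
      rw [if_pos (le_refl n), hcn, ← he0, hem]
    · simp only [if_neg h]
      have : n + m - n = m := by omega
      rw [this, hem]
  · intro i hi
    by_cases hin : i + 1 ≤ n
    · have : i ≤ n := by omega
      simp only [if_pos hin, if_pos this]
      exact hc i (by omega)
    · by_cases hii : i ≤ n
      · have hieq : i = n := by omega
        have hm : 0 < m := by omega
        simp only [hieq]
        rw [if_pos (le_refl n), if_neg (show ¬ (n + 1 ≤ n) by omega), hcn, ← he0,
          show n + 1 - n = 1 by omega]
        exact he 0 hm
      · simp only [if_neg hin, if_neg hii]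
        have h1 : i + 1 - n = (i - n) + 1 := by omega
        rw [h1]
        exact he (i - n) (by omega)

theorem reachN_fixed {X : Type*} [MetricSpace X] {f : X → X} {ε : ℝ} {p : X}
    (hp : f p = p) (hε : 0 < ε) (n : ℕ) : ReachN f ε n p p :=
  ⟨fun _ => p, rfl, rfl, fun i _ => by simp [hp, hε]⟩

theorem CT_coe_zero : ((0:ℝ) : AddCircle (1:ℝ)) = 0 := by norm_num

theorem CT_coe_int_add (x : ℝ) (k : ℤ) :
    ((x + k : ℝ) : AddCircle (1:ℝ)) = (x : AddCircle (1:ℝ)) := by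
  rw [AddCircle.coe_add]
  have : ((k:ℝ) : AddCircle (1:ℝ)) = 0 := by
    rw [AddCircle.coe_eq_zero_iff]; exact ⟨k, by simp⟩
  rw [this, add_zero]

theorem CT_dist_pair_le (x y x' y' : ℝ) :
    dist (((x : AddCircle (1:ℝ)), (y : AddCircle (1:ℝ))))
      (((x' : AddCircle (1:ℝ)), (y' : AddCircle (1:ℝ)))) ≤ max |x - x'| |y - y'| := by
  rw [Prod.dist_eq]
  have h1 : dist ((x : AddCircle (1:ℝ))) ((x' : AddCircle (1:ℝ))) ≤ |x - x'| := by
    rw [dist_eq_norm, ← AddCircle.coe_sub]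
    simpa using QuotientAddGroup.norm_mk_le_norm (S := AddSubgroup.zmultiples (1:ℝ)) (m := x - x')
  have h2 : dist ((y : AddCircle (1:ℝ))) ((y' : AddCircle (1:ℝ))) ≤ |y - y'| := by
    rw [dist_eq_norm, ← AddCircle.coe_sub]
    simpa using QuotientAddGroup.norm_mk_le_norm (S := AddSubgroup.zmultiples (1:ℝ)) (m := y - y')
  exact max_le_max h1 h2

theorem CT_dense_phi (z : AddCircle (1:ℝ)) {ε : ℝ} (hε : 0 < ε) :
    ∃ k : ℤ, dist (((k * CTφ : ℝ) : AddCircle (1:ℝ))) z < ε := by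
  set S : AddSubgroup ℝ := AddSubgroup.closure {(1:ℝ), CTφ} with hSdef
  have hS : Dense (S : Set ℝ) := by
    rcases AddSubgroup.dense_or_cyclic S with h | ⟨a, ha⟩
    · exact h
    · exfalso
      have h1 : (1:ℝ) ∈ S := AddSubgroup.subset_closure (by simp)
      have hφ : CTφ ∈ S := AddSubgroup.subset_closure (by simp)
      rw [ha, AddSubgroup.mem_closure_singleton] at h1 hφ
      obtain ⟨n, hn⟩ := h1
      obtain ⟨m, hm⟩ := hφ
      rw [zsmul_eq_mul] at hn hm
      have hn0 : (n : ℝ) ≠ 0 := by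
        intro h; rw [h, zero_mul] at hn; exact one_ne_zero hn.symm
      refine CTφ_irrational ⟨(m : ℚ) / (n : ℚ), ?_⟩
      have ha0 : a = 1 / n := by field_simp at hn ⊢; linarith
      push_cast
      rw [← hm, ha0]
      field_simp
  have hcont : Continuous ((↑) : ℝ → AddCircle (1:ℝ)) := continuous_quotient_mk'
  have hsurj : Function.Surjective ((↑) : ℝ → AddCircle (1:ℝ)) := fun q => Quotient.exists_rep q
  have himg : Dense (((↑) : ℝ → AddCircle (1:ℝ)) '' S) :=
    hsurj.denseRange.dense_image hcont hS
  set T : AddSubgroup (AddCircle (1:ℝ)) := AddSubgroup.zmultiples ((CTφ : ℝ) : AddCircle (1:ℝ))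
  have hsub : (((↑) : ℝ → AddCircle (1:ℝ)) '' S) ⊆ (T : Set (AddCircle (1:ℝ))) := by
    rintro _ ⟨x, hx, rfl⟩
    induction hx using AddSubgroup.closure_induction with
    | mem y hy =>
      rcases hy with hy | hy
      · subst hy
        have : ((1:ℝ) : AddCircle (1:ℝ)) = 0 := AddCircle.coe_period 1
        rw [this]; exact zero_mem T
      · subst hy
        exact AddSubgroup.mem_zmultiples _
    | zero => simpa using zero_mem T
    | add x y _ _ hx hy => rw [AddCircle.coe_add]; exact add_mem hx hy
    | neg x _ hx => rw [AddCircle.coe_neg]; exact neg_mem hx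
  have hT : Dense (T : Set (AddCircle (1:ℝ))) := himg.mono hsub
  obtain ⟨y, hy1, hy2⟩ := Metric.dense_iff.mp hT z ε hε
  rw [SetLike.mem_coe, AddSubgroup.mem_zmultiples_iff] at hy2
  obtain ⟨k, hk⟩ := hy2
  refine ⟨k, ?_⟩
  have : ((k * CTφ : ℝ) : AddCircle (1:ℝ)) = y := by
    rw [← hk, ← AddCircle.coe_zsmul, zsmul_eq_mul]
  rw [this]
  exact Metric.mem_ball.mp hy1


theorem CT_dist_sub_shift {M : Type*} [SeminormedAddCommGroup M] (α β γ : M) :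
    dist (α - β) γ = dist β (α - γ) := by
  rw [dist_eq_norm, dist_eq_norm, show α - β - γ = -(β - (α - γ)) by abel, norm_neg]

section Amap
variable (A : AddCircle (1 : ℝ) × AddCircle (1 : ℝ) → AddCircle (1 : ℝ) × AddCircle (1 : ℝ))
    (hA : ∀ m n : ℝ, A (((m : ℝ) : AddCircle (1 : ℝ)), ((n : ℝ) : AddCircle (1 : ℝ))) =
      (((2 * m + n : ℝ) : AddCircle (1 : ℝ)), ((m + n : ℝ) : AddCircle (1 : ℝ))))

include hA

theorem CT_A_zero : A 0 = 0 := by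
  have := hA 0 0
  rw [CT_coe_zero] at this
  simp at this
  exact this

theorem CT_A_reach_zero {ε : ℝ} (hε : 0 < ε)
    (a : AddCircle (1 : ℝ) × AddCircle (1 : ℝ)) : ∃ n ≥ 1, ReachN A ε n a 0 := by
  have hφ1 : (1:ℝ) < CTφ := CTφ_gt_one
  set μ : ℝ := 2 - CTφ with hμdef
  have hμ0 : 0 < μ := by have := CTφ_lt_two; simp [hμdef]; linarith
  have hμ1 : μ < 1 := by simp [hμdef]; linarith
  obtain ⟨a₁, ha₁⟩ := CT_coe_surj 1 a.1
  obtain ⟨a₂, ha₂⟩ := CT_coe_surj 1 a.2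
  have haa : a = ((a₁ : AddCircle (1:ℝ)), (a₂ : AddCircle (1:ℝ))) := by
    rw [ha₁, ha₂]
  set x : ℝ := 2 * a₁ + a₂ with hx
  set y : ℝ := a₁ + a₂ with hy
  have hAa : A a = ((x : AddCircle (1:ℝ)), (y : AddCircle (1:ℝ))) := by
    rw [haa, hA]
  obtain ⟨k, hk⟩ :=
    CT_dense_phi (((-(x * CTφ) : ℝ) : AddCircle (1:ℝ)) - ((y:ℝ) : AddCircle (1:ℝ))) hε
  set s : ℝ := x + k with hs
  have hcoe1 : ((s : ℝ) : AddCircle (1:ℝ)) = ((x:ℝ) : AddCircle (1:ℝ)) := CT_coe_int_add x k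
  have hcoe2 : dist (((y:ℝ) : AddCircle (1:ℝ))) (((-(s * CTφ) : ℝ) : AddCircle (1:ℝ))) < ε := by
    have heq : ((-(s * CTφ) : ℝ) : AddCircle (1:ℝ))
        = ((-(x * CTφ) : ℝ) : AddCircle (1:ℝ)) - (((k * CTφ : ℝ)) : AddCircle (1:ℝ)) := by
      rw [← AddCircle.coe_sub]; congr 1; rw [hs]; ring
    rw [dist_comm, heq, CT_dist_sub_shift]
    exact hk
  -- choose K
  have hD : (0:ℝ) < |s| * CTφ + 1 := by positivity
  obtain ⟨K, hK⟩ := exists_pow_lt_of_lt_one (div_pos hε hD) hμ1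
  have hKbound : |s| * CTφ * μ ^ (K + 1) < ε := by
    have hp : (0:ℝ) < μ ^ K := pow_pos hμ0 K
    have h2 : μ ^ K * (|s| * CTφ + 1) < ε := (lt_div_iff₀ hD).mp hK
    have habs : 0 ≤ |s| := abs_nonneg s
    rw [pow_succ]
    nlinarith
  -- the chain
  set c : ℕ → AddCircle (1 : ℝ) × AddCircle (1 : ℝ) := fun i =>
    if i = 0 then a else if i ≤ K + 1 then
      (((μ ^ (i-1) * s : ℝ) : AddCircle (1:ℝ)), ((-(μ ^ (i-1) * s * CTφ) : ℝ) : AddCircle (1:ℝ)))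
    else 0 with hc
  refine ⟨K + 2, by omega, c, by simp [hc], by simp [hc], ?_⟩
  intro i hi
  rcases Nat.eq_zero_or_pos i with rfl | hipos
  · -- step 0
    have hc1 : c 1 = (((s : ℝ) : AddCircle (1:ℝ)), ((-(s * CTφ) : ℝ) : AddCircle (1:ℝ))) := by
      simp [hc]
    rw [show c 0 = a by simp [hc], hc1, hAa]
    rw [Prod.dist_eq]
    apply max_lt
    · rw [← hcoe1]
      simpa using hε
    · exact hcoe2
  · rcases Nat.lt_or_ge i (K + 1) with hiK | hiK
    · -- exact steps
      have hne : ¬ (i = 0) := by omega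
      have hle : i ≤ K + 1 := by omega
      have hle1 : i + 1 ≤ K + 1 := by omega
      have hci : c i = (((μ ^ (i-1) * s : ℝ) : AddCircle (1:ℝ)),
          ((-(μ ^ (i-1) * s * CTφ) : ℝ) : AddCircle (1:ℝ))) := by
        rw [hc]; simp only [if_neg hne, if_pos hle]
      have hci1 : c (i+1) = (((μ ^ i * s : ℝ) : AddCircle (1:ℝ)),
          ((-(μ ^ i * s * CTφ) : ℝ) : AddCircle (1:ℝ))) := by
        rw [hc]
        simp only [if_neg (show ¬ (i + 1 = 0) by omega), if_pos hle1, Nat.add_sub_cancel]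
      rw [hci, hci1, hA]
      have e1 : 2 * (μ ^ (i-1) * s) + -(μ ^ (i-1) * s * CTφ) = μ ^ i * s := by
        have hpow : μ ^ i = μ ^ (i-1) * μ := by
          rw [← pow_succ]; congr 1; all_goals omega
        rw [hpow, hμdef]; ring
      have e2 : μ ^ (i-1) * s + -(μ ^ (i-1) * s * CTφ) = -(μ ^ i * s * CTφ) := by
        have hpow : μ ^ i = μ ^ (i-1) * μ := by
          rw [← pow_succ]; congr 1; all_goals omega
        rw [hpow, hμdef]
        linear_combination (-(μ ^ (i-1) * s)) * CTφ_sq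
      rw [e1, e2]
      simpa using hε
    · -- last step: i = K + 1
      have hieq : i = K + 1 := by omega
      subst hieq
      have hci : c (K+1) = (((μ ^ K * s : ℝ) : AddCircle (1:ℝ)),
          ((-(μ ^ K * s * CTφ) : ℝ) : AddCircle (1:ℝ))) := by
        rw [hc]
        simp only [if_neg (show ¬ (K + 1 = 0) by omega), if_pos (le_refl (K+1)),
          Nat.add_sub_cancel]
      have hci1 : c (K+2) = 0 := by
        rw [hc]
        simp only [if_neg (show ¬ (K + 2 = 0) by omega),
          if_neg (show ¬ (K + 2 ≤ K + 1) by omega)]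
      rw [hci, hci1, hA]
      have e1 : (2 * (μ ^ K * s) + -(μ ^ K * s * CTφ)) = μ ^ (K+1) * s := by
        rw [pow_succ, hμdef]; ring
      have e2 : μ ^ K * s + -(μ ^ K * s * CTφ) = -(μ ^ (K+1) * s * CTφ) := by
        rw [pow_succ, hμdef]
        linear_combination (-(μ ^ K * s)) * CTφ_sq
      rw [e1, e2]
      have h0 : (0 : AddCircle (1 : ℝ) × AddCircle (1 : ℝ))
          = (((0:ℝ) : AddCircle (1:ℝ)), ((0:ℝ) : AddCircle (1:ℝ))) := by
        rw [CT_coe_zero]; rfl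
      rw [h0]
      refine lt_of_le_of_lt (CT_dist_pair_le _ _ _ _) ?_
      apply max_lt
      · rw [sub_zero, abs_mul, abs_pow, abs_of_pos hμ0]
        calc μ ^ (K+1) * |s| ≤ |s| * CTφ * μ ^ (K+1) := by
              nlinarith [mul_nonneg (abs_nonneg s) (pow_pos hμ0 (K+1)).le, hφ1]
          _ < ε := hKbound
      · rw [sub_zero, abs_neg, abs_mul, abs_mul, abs_pow, abs_of_pos hμ0,
          abs_of_pos (by linarith : (0:ℝ) < CTφ)]
        calc μ ^ (K+1) * |s| * CTφ = |s| * CTφ * μ ^ (K+1) := by ring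
          _ < ε := hKbound

theorem CT_A_reach_from_zero {ε : ℝ} (hε : 0 < ε)
    (b : AddCircle (1 : ℝ) × AddCircle (1 : ℝ)) : ∃ n ≥ 1, ReachN A ε n 0 b := by
  have hφ1 : (1:ℝ) < CTφ := CTφ_gt_one
  set lam : ℝ := CTφ ^ 2 with hlam
  have hlam1 : 1 < lam := by rw [hlam]; nlinarith
  have hlam0 : (0:ℝ) < lam := by linarith
  set ν : ℝ := 1 / lam with hν
  have hν0 : 0 < ν := by rw [hν]; positivity
  have hν1 : ν < 1 := by rw [hν]; rw [div_lt_one hlam0]; exact hlam1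
  obtain ⟨b₁, hb₁⟩ := CT_coe_surj 1 b.1
  obtain ⟨b₂, hb₂⟩ := CT_coe_surj 1 b.2
  have hbb : b = ((b₁ : AddCircle (1:ℝ)), (b₂ : AddCircle (1:ℝ))) := by rw [hb₁, hb₂]
  obtain ⟨k, hk⟩ :=
    CT_dense_phi (((b₁:ℝ) : AddCircle (1:ℝ)) - ((b₂ * CTφ : ℝ) : AddCircle (1:ℝ))) hε
  set t0 : ℝ := b₂ + k with ht0
  have hcoe1 : ((t0 : ℝ) : AddCircle (1:ℝ)) = ((b₂:ℝ) : AddCircle (1:ℝ)) := CT_coe_int_add b₂ k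
  have hcoe2 : dist (((t0 * CTφ : ℝ) : AddCircle (1:ℝ))) (((b₁:ℝ) : AddCircle (1:ℝ))) < ε := by
    have heq : ((t0 * CTφ : ℝ) : AddCircle (1:ℝ))
        = ((b₂ * CTφ : ℝ) : AddCircle (1:ℝ)) + (((k * CTφ : ℝ)) : AddCircle (1:ℝ)) := by
      rw [← AddCircle.coe_add]; congr 1; rw [ht0]; ring
    rw [heq, dist_eq_norm]
    rw [dist_eq_norm] at hk
    rw [show ((b₂ * CTφ : ℝ) : AddCircle (1:ℝ)) + (((k * CTφ : ℝ)) : AddCircle (1:ℝ))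
        - ((b₁:ℝ) : AddCircle (1:ℝ))
        = (((k * CTφ : ℝ)) : AddCircle (1:ℝ))
        - (((b₁:ℝ) : AddCircle (1:ℝ)) - ((b₂ * CTφ : ℝ) : AddCircle (1:ℝ))) from by abel]
    exact hk
  have hD : (0:ℝ) < |t0| * CTφ + 1 := by positivity
  obtain ⟨K₀, hK₀⟩ := exists_pow_lt_of_lt_one (div_pos hε hD) hν1
  set K : ℕ := K₀ + 1 with hKdef
  set u : ℝ := t0 * ν ^ K with hu
  have hKu : lam ^ K * u = t0 := by
    rw [hu, hν]
    field_simp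
    rw [mul_comm (lam ^ K), mul_assoc, ← mul_pow, mul_one_div_cancel hlam0.ne', one_pow, mul_one]
  have hubound : |u| * CTφ < ε := by
    have h1 : ν ^ K ≤ ν ^ K₀ := by
      rw [hKdef, pow_succ]
      nlinarith [pow_pos hν0 K₀]
    have h2 : ν ^ K₀ * (|t0| * CTφ + 1) < ε := (lt_div_iff₀ hD).mp hK₀
    have h3 : |u| = |t0| * ν ^ K := by
      rw [hu, abs_mul, abs_pow, abs_of_pos hν0]
    rw [h3]
    nlinarith [pow_pos hν0 K, pow_pos hν0 K₀, abs_nonneg t0]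
  set c : ℕ → AddCircle (1 : ℝ) × AddCircle (1 : ℝ) := fun i =>
    if i = 0 then 0 else if i ≤ K then
      (((lam ^ (i-1) * u * CTφ : ℝ) : AddCircle (1:ℝ)), ((lam ^ (i-1) * u : ℝ) : AddCircle (1:ℝ)))
    else b with hc
  refine ⟨K + 1, by omega, c, by simp [hc], ?_, ?_⟩
  · rw [hc]
    simp only [if_neg (show ¬ (K + 1 = 0) by omega), if_neg (show ¬ (K + 1 ≤ K) by omega)]
  intro i hi
  rcases Nat.eq_zero_or_pos i with rfl | hipos
  · -- step 0
    have hc1 : c 1 = (((u * CTφ : ℝ) : AddCircle (1:ℝ)), ((u : ℝ) : AddCircle (1:ℝ))) := by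
      rw [hc]
      simp only [if_neg (show ¬ (1 = 0) by omega), if_pos (show 1 ≤ K by omega)]
      norm_num
    rw [show c 0 = 0 by simp [hc], CT_A_zero A hA, hc1]
    rw [show (0 : AddCircle (1 : ℝ) × AddCircle (1 : ℝ))
        = (((0:ℝ) : AddCircle (1:ℝ)), ((0:ℝ) : AddCircle (1:ℝ))) from by rw [CT_coe_zero]; rfl]
    refine lt_of_le_of_lt (CT_dist_pair_le _ _ _ _) ?_
    apply max_lt
    · rw [zero_sub, abs_neg, abs_mul, abs_of_pos (by linarith : (0:ℝ) < CTφ)]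
      exact hubound
    · rw [zero_sub, abs_neg]
      nlinarith [abs_nonneg u]
  · rcases Nat.lt_or_ge i K with hiK | hiK
    · -- exact steps
      have hne : ¬ (i = 0) := by omega
      have hci : c i = (((lam ^ (i-1) * u * CTφ : ℝ) : AddCircle (1:ℝ)),
          ((lam ^ (i-1) * u : ℝ) : AddCircle (1:ℝ))) := by
        rw [hc]; simp only [if_neg hne, if_pos (show i ≤ K by omega)]
      have hci1 : c (i+1) = (((lam ^ i * u * CTφ : ℝ) : AddCircle (1:ℝ)),
          ((lam ^ i * u : ℝ) : AddCircle (1:ℝ))) := by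
        rw [hc]
        simp only [if_neg (show ¬ (i + 1 = 0) by omega), if_pos (show i + 1 ≤ K by omega),
          Nat.add_sub_cancel]
      rw [hci, hci1, hA]
      have hpow : lam ^ i = lam ^ (i-1) * lam := by rw [← pow_succ]; congr 1; all_goals omega
      have e1 : 2 * (lam ^ (i-1) * u * CTφ) + lam ^ (i-1) * u = lam ^ i * u * CTφ := by
        rw [hpow, hlam]
        linear_combination (-(lam ^ (i-1) * u * (CTφ + 1))) * CTφ_sq
      have e2 : lam ^ (i-1) * u * CTφ + lam ^ (i-1) * u = lam ^ i * u := by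
        rw [hpow, hlam]
        linear_combination (-(lam ^ (i-1) * u)) * CTφ_sq
      rw [e1, e2]
      simpa using hε
    · -- last step: i = K
      have hieq : i = K := by omega
      subst hieq
      have hci : c K = (((lam ^ (K-1) * u * CTφ : ℝ) : AddCircle (1:ℝ)),
          ((lam ^ (K-1) * u : ℝ) : AddCircle (1:ℝ))) := by
        rw [hc]; simp only [if_neg (show ¬ (K = 0) by omega), if_pos (le_refl K)]
      have hci1 : c (K+1) = b := by
        rw [hc]
        simp only [if_neg (show ¬ (K + 1 = 0) by omega), if_neg (show ¬ (K + 1 ≤ K) by omega)]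
      rw [hci, hci1, hA, hbb]
      have hpow : lam ^ K = lam ^ (K-1) * lam := by rw [← pow_succ]; congr 1; all_goals omega
      have e1 : 2 * (lam ^ (K-1) * u * CTφ) + lam ^ (K-1) * u = t0 * CTφ := by
        rw [← hKu, hpow, hlam]
        linear_combination (-(lam ^ (K-1) * u * (CTφ + 1))) * CTφ_sq
      have e2 : lam ^ (K-1) * u * CTφ + lam ^ (K-1) * u = t0 := by
        rw [← hKu, hpow, hlam]
        linear_combination (-(lam ^ (K-1) * u)) * CTφ_sq
      rw [e1, e2]
      rw [Prod.dist_eq]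
      apply max_lt
      · exact hcoe2
      · rw [hcoe1]
        simpa using hε
end Amap

theorem CT2_dist_le (x y : ℝ) :
    dist ((x : ℝ) : AddCircle (2:ℝ)) ((y : ℝ) : AddCircle (2:ℝ)) ≤ |x - y| := by
  rw [dist_eq_norm, ← AddCircle.coe_sub]
  simpa using QuotientAddGroup.norm_mk_le_norm (S := AddSubgroup.zmultiples (2:ℝ)) (m := x - y)

theorem CT2_coe_eq (x y : ℝ) (j : ℤ) (h : x = y + 2 * j) :
    ((x : ℝ) : AddCircle (2:ℝ)) = ((y : ℝ) : AddCircle (2:ℝ)) := by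
  subst h
  rw [AddCircle.coe_add]
  have : ((2 * (j:ℝ) : ℝ) : AddCircle (2:ℝ)) = 0 := by
    rw [AddCircle.coe_eq_zero_iff]
    exact ⟨j, by rw [zsmul_eq_mul]; ring⟩
  rw [this, add_zero]

section Gmap
variable (G : ℝ → ℝ) (hcont : Continuous G) (hmono : StrictMono G)
    (hper : ∀ x : ℝ, G (x + 2) = G x + 2)
    (hge : ∀ x : ℝ, x ≤ G x)
    (hfix : ∀ x : ℝ, G x = x ↔ ∃ k : ℤ, x = (k : ℝ))
    (g : AddCircle (2 : ℝ) → AddCircle (2 : ℝ))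
    (hg : ∀ x : ℝ, g ((x : ℝ) : AddCircle (2 : ℝ)) = ((G x : ℝ) : AddCircle (2 : ℝ)))

include hfix in
theorem CT_G_int (k : ℤ) : G (k:ℝ) = (k:ℝ) := (hfix k).mpr ⟨k, rfl⟩

include hcont hmono hge hfix hg in
theorem CT_orbit_reach (α : ℝ) {ε : ℝ} (hε : 0 < ε) :
    ∃ n ≥ 1, ReachN g ε n ((α : ℝ) : AddCircle (2:ℝ)) (((⌈α⌉ : ℝ) : AddCircle (2:ℝ))) := by
  set a : ℕ → ℝ := fun n => G^[n] α with ha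
  have ha0 : a 0 = α := rfl
  have hstep : ∀ n, a (n + 1) = G (a n) := fun n => Function.iterate_succ_apply' G n α
  have hmonoA : Monotone a := monotone_nat_of_le_succ fun n => by rw [hstep]; exact hge _
  have hbd : ∀ n, a n ≤ (⌈α⌉ : ℝ) := by
    intro n
    induction n with
    | zero => exact Int.le_ceil α
    | succ n ih =>
      rw [hstep]
      calc G (a n) ≤ G (⌈α⌉ : ℝ) := hmono.monotone ih
        _ = (⌈α⌉ : ℝ) := CT_G_int G hfix ⌈α⌉
  have hbdd : BddAbove (Set.range a) := ⟨(⌈α⌉ : ℝ), by rintro _ ⟨n, rfl⟩; exact hbd n⟩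
  set L : ℝ := ⨆ n, a n with hL
  have htend : Tendsto a atTop (𝓝 L) := tendsto_atTop_ciSup hmonoA hbdd
  have htend1 : Tendsto (fun n => a (n + 1)) atTop (𝓝 L) :=
    htend.comp (tendsto_add_atTop_nat 1)
  have htend2 : Tendsto (fun n => G (a n)) atTop (𝓝 (G L)) := (hcont.tendsto L).comp htend
  have hGL : G L = L := by
    refine tendsto_nhds_unique ?_ htend1
    simpa only [← hstep] using htend2
  obtain ⟨j, hj⟩ := (hfix L).mp hGL
  have hαL : α ≤ L := by rw [← ha0]; exact le_ciSup hbdd 0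
  have hLle : L ≤ (⌈α⌉ : ℝ) := ciSup_le hbd
  have hLeq : L = (⌈α⌉ : ℝ) := by
    have h1 : ⌈α⌉ ≤ j := Int.ceil_le.mpr (by rw [← hj]; exact hαL)
    have h2 : j ≤ ⌈α⌉ := by
      have : (j : ℝ) ≤ (⌈α⌉ : ℝ) := by rw [← hj]; exact hLle
      exact_mod_cast this
    have : j = ⌈α⌉ := le_antisymm h2 h1
    rw [hj, this]
  obtain ⟨N, hN⟩ := (Metric.tendsto_atTop.mp htend) ε hε
  refine ⟨N + 1, by omega, fun i => if i ≤ N then ((a i : ℝ) : AddCircle (2:ℝ))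
    else ((⌈α⌉ : ℝ) : AddCircle (2:ℝ)), by simp [ha0], by simp, ?_⟩
  intro i hi
  rcases Nat.lt_or_ge i N with hiN | hiN
  · simp only [if_pos (show i ≤ N by omega), if_pos (show i + 1 ≤ N by omega)]
    rw [hg, ← hstep]
    simpa using hε
  · simp only [if_pos (show i ≤ N by omega), if_neg (show ¬ (i + 1 ≤ N) by omega)]
    rw [hg, ← hstep]
    refine lt_of_le_of_lt (CT2_dist_le _ _) ?_
    have h1 : a i ≤ a (i + 1) := hmonoA (by omega)
    have h2 : a (i + 1) ≤ L := by rw [hLeq]; exact hbd (i + 1)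
    have h4 : a i ≤ L := by rw [hLeq]; exact hbd i
    have h3 : dist (a i) L < ε := hN i hiN
    rw [Real.dist_eq, abs_of_nonpos (by linarith)] at h3
    rw [← hLeq, abs_of_nonpos (by linarith)]
    linarith

include hfix hg in
theorem CT_g_fix (k : ℤ) : g (((k:ℝ) : ℝ) : AddCircle (2:ℝ)) = (((k:ℝ) : ℝ) : AddCircle (2:ℝ)) := by
  rw [hg, CT_G_int G hfix]

include hcont hmono hge hfix hg in
theorem CT_march (m : ℤ) {ε : ℝ} (hε : 0 < ε) :
    ∃ n ≥ 1, ReachN g ε n (((m:ℝ) : ℝ) : AddCircle (2:ℝ))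
      ((((m:ℝ) + 1 : ℝ)) : AddCircle (2:ℝ)) := by
  set δ : ℝ := min ε 1 / 2 with hδ
  have hδ0 : 0 < δ := by rw [hδ]; positivity
  have hδε : δ < ε := by
    rw [hδ]; have h1 : min ε 1 ≤ ε := min_le_left ε 1; linarith
  have hδ1 : δ < 1 := by
    rw [hδ]; linarith [min_le_right ε 1]
  -- first: one step from m to m + δ
  have hchain1 : ReachN g ε 1 (((m:ℝ) : ℝ) : AddCircle (2:ℝ)) (((m + δ : ℝ)) : AddCircle (2:ℝ)) := by
    refine ⟨fun i => match i with
      | 0 => (((m:ℝ) : ℝ) : AddCircle (2:ℝ))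
      | _ + 1 => (((m + δ : ℝ)) : AddCircle (2:ℝ)), rfl, rfl, ?_⟩
    intro i hi
    have : i = 0 := by omega
    subst this
    show dist (g ((((m:ℝ)) : ℝ) : AddCircle (2:ℝ))) (((m + δ : ℝ)) : AddCircle (2:ℝ)) < ε
    rw [CT_g_fix G hfix g hg m]
    refine lt_of_le_of_lt (CT2_dist_le _ _) ?_
    rw [show (m:ℝ) - (m + δ) = -δ by ring, abs_neg, abs_of_pos hδ0]
    exact hδε
  obtain ⟨n₂, hn₂, hchain2⟩ := CT_orbit_reach G hcont hmono hge hfix g hg (m + δ) hε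
  have hceil : (⌈(m:ℝ) + δ⌉ : ℝ) = (m:ℝ) + 1 := by
    have : ⌈(m:ℝ) + δ⌉ = m + 1 := by
      rw [Int.ceil_eq_iff]
      constructor
      · push_cast; linarith
      · push_cast; linarith
    rw [this]; push_cast; ring
  rw [hceil] at hchain2
  exact ⟨1 + n₂, by omega, reachN_trans hchain1 hchain2⟩

include hcont hmono hge hfix hg in
theorem CT_march_to (m : ℤ) (d : ℕ) {ε : ℝ} (hε : 0 < ε) :
    ∃ n ≥ 1, ReachN g ε n (((m:ℝ) : ℝ) : AddCircle (2:ℝ))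
      ((((m + d : ℤ) : ℝ)) : AddCircle (2:ℝ)) := by
  induction d with
  | zero =>
    refine ⟨1, le_refl 1, fun _ => (((m:ℝ) : ℝ) : AddCircle (2:ℝ)), rfl, by norm_num, ?_⟩
    intro i hi
    rw [CT_g_fix G hfix g hg m]
    simpa using hε
  | succ d ih =>
    obtain ⟨n₁, hn₁, hchain1⟩ := ih
    obtain ⟨n₂, hn₂, hchain2⟩ := CT_march G hcont hmono hge hfix g hg (m + d) hε
    have hcast : (((m + d : ℤ) : ℝ) : ℝ) + 1 = (((m + (d+1) : ℤ) : ℝ)) := by push_cast; ring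
    rw [hcast] at hchain2
    exact ⟨n₁ + n₂, by omega, reachN_trans hchain1 hchain2⟩

include hcont hmono hge hfix hg in
theorem CT_g_reach_zero {ε : ℝ} (hε : 0 < ε) (a : AddCircle (2:ℝ)) :
    ∃ n ≥ 1, ReachN g ε n a 0 := by
  obtain ⟨α, hα⟩ : ∃ x : ℝ, ((x:ℝ) : AddCircle (2:ℝ)) = a :=
    QuotientAddGroup.induction_on a fun x => ⟨x, rfl⟩
  obtain ⟨n₁, hn₁, hchain1⟩ := CT_orbit_reach G hcont hmono hge hfix g hg α hε
  set m₁ : ℤ := ⌈α⌉ with hm₁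
  set d : ℕ := (m₁ % 2).toNat with hd
  obtain ⟨n₂, hn₂, hchain2⟩ := CT_march_to G hcont hmono hge hfix g hg m₁ d hε
  have hdcast : ((d : ℤ)) = m₁ % 2 := Int.toNat_of_nonneg (Int.emod_nonneg m₁ (by norm_num))
  have heven : ∃ j : ℤ, m₁ + d = 2 * j := by
    refine ⟨m₁ / 2 + m₁ % 2, ?_⟩
    omega
  obtain ⟨j, hj⟩ := heven
  have hzero : (((m₁ + d : ℤ) : ℝ) : AddCircle (2:ℝ)) = 0 := by
    rw [AddCircle.coe_eq_zero_iff]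
    refine ⟨j, ?_⟩
    rw [zsmul_eq_mul]
    rw [hj]
    push_cast; ring
  rw [hα] at hchain1
  rw [hzero] at hchain2
  exact ⟨n₁ + n₂, by omega, reachN_trans hchain1 hchain2⟩

include hcont hmono hper hge hfix hg in
theorem CT_preorbit (β : ℝ) (hβ : ¬ ∃ j : ℤ, β = (j:ℝ)) {ε : ℝ} (hε : 0 < ε) :
    ∃ n ≥ 1, ReachN g ε n (((⌊β⌋ : ℝ) : ℝ) : AddCircle (2:ℝ)) ((β : ℝ) : AddCircle (2:ℝ)) := by
  have hper' : ∀ (x : ℝ) (n : ℕ), G (x - 2 * n) = G x - 2 * n := by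
    intro x n
    induction n with
    | zero => simp
    | succ n ih =>
      have h := hper (x - 2 * ((n:ℝ) + 1))
      have harg : x - 2 * ((n:ℝ) + 1) + 2 = x - 2 * n := by ring
      rw [harg] at h
      push_cast
      linarith
  have hsurj : Function.Surjective G := by
    intro y
    obtain ⟨n, hn⟩ := exists_nat_ge ((G y - y) / 2)
    have hGa : G (y - 2 * n) ≤ y := by
      rw [hper']
      linarith
    have hmem : y ∈ Set.Icc (G (y - 2 * n)) (G y) := ⟨hGa, hge y⟩
    have hsub := intermediate_value_Icc
      (by linarith [Nat.cast_nonneg (α := ℝ) n] : y - 2 * (n:ℝ) ≤ y) hcont.continuousOn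
    obtain ⟨x, _, hx⟩ := hsub hmem
    exact ⟨x, hx⟩
  set bseq : ℕ → ℝ := fun j => (fun x => Classical.choose (hsurj x))^[j] β with hbdef
  have hb0 : bseq 0 = β := rfl
  have hbstep : ∀ j, G (bseq (j + 1)) = bseq j := by
    intro j
    have h : bseq (j + 1) = Classical.choose (hsurj (bseq j)) := by
      rw [hbdef]
      exact Function.iterate_succ_apply' _ j β
    rw [h]
    exact Classical.choose_spec (hsurj (bseq j))
  set k : ℤ := ⌊β⌋ with hk
  have hk1 : (k:ℝ) < β := lt_of_le_of_ne (Int.floor_le β) (fun h => hβ ⟨k, h.symm⟩)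
  have hk2 : β < (k:ℝ) + 1 := Int.lt_floor_add_one β
  have hlb : ∀ j, (k:ℝ) < bseq j := by
    intro j
    induction j with
    | zero => exact hk1
    | succ j ih =>
      have h : G ((k:ℝ)) < G (bseq (j + 1)) := by
        rw [hbstep, CT_G_int G hfix]; exact ih
      exact hmono.lt_iff_lt.mp h
  have hanti : Antitone bseq := antitone_nat_of_succ_le fun j => by
    calc bseq (j + 1) ≤ G (bseq (j + 1)) := hge _
      _ = bseq j := hbstep j
  have hbdd : BddBelow (Set.range bseq) := ⟨(k:ℝ), by rintro _ ⟨j, rfl⟩; exact (hlb j).le⟩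
  set L : ℝ := ⨅ j, bseq j with hL
  have htend : Tendsto bseq atTop (𝓝 L) := tendsto_atTop_ciInf hanti hbdd
  have htend1 : Tendsto (fun j => bseq (j + 1)) atTop (𝓝 L) :=
    htend.comp (tendsto_add_atTop_nat 1)
  have hGL : G L = L := by
    have h2 : Tendsto (fun j => G (bseq (j + 1))) atTop (𝓝 (G L)) :=
      (hcont.tendsto L).comp htend1
    have h3 : Tendsto (fun j => G (bseq (j + 1))) atTop (𝓝 L) := by
      simp only [hbstep]; exact htend
    exact tendsto_nhds_unique h2 h3
  obtain ⟨j₀, hj₀⟩ := (hfix L).mp hGL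
  have hkle : (k:ℝ) ≤ L := le_ciInf fun j => (hlb j).le
  have hLle : L ≤ β := by
    have := ciInf_le hbdd 0
    rwa [hb0] at this
  have hLk : L = (k:ℝ) := by
    have h1 : (k:ℝ) ≤ (j₀:ℝ) := by rw [← hj₀]; exact hkle
    have h2 : (j₀:ℝ) < (k:ℝ) + 1 := by rw [← hj₀]; linarith
    have h1' : k ≤ j₀ := by exact_mod_cast h1
    have h2' : j₀ < k + 1 := by exact_mod_cast h2
    have : j₀ = k := by omega
    rw [hj₀, this]
  obtain ⟨N₀, hN₀⟩ := Metric.tendsto_atTop.mp htend ε hε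
  set J : ℕ := max N₀ 1 with hJ
  have hJ1 : 1 ≤ J := le_max_right _ _
  have hJd : dist (bseq J) L < ε := hN₀ J (le_max_left _ _)
  refine ⟨J + 1, by omega, fun i => if i = 0 then (((k:ℝ) : ℝ) : AddCircle (2:ℝ))
    else ((bseq (J + 1 - i) : ℝ) : AddCircle (2:ℝ)), by simp, ?_, ?_⟩
  · simp only [if_neg (show ¬ (J + 1 = 0) by omega), Nat.sub_self, hb0]
  intro i hi
  rcases Nat.eq_zero_or_pos i with rfl | hipos
  · have e0 : (0:ℕ) = 0 := rfl
    norm_num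
    rw [CT_g_fix G hfix g hg k]
    refine lt_of_le_of_lt (CT2_dist_le _ _) ?_
    rw [Real.dist_eq, hLk] at hJd
    rwa [abs_sub_comm]
  · simp only [if_neg (show ¬ (i = 0) by omega), if_neg (show ¬ (i + 1 = 0) by omega)]
    rw [hg]
    have h1 : J + 1 - i = (J - i) + 1 := by omega
    have h2 : J + 1 - (i + 1) = J - i := by omega
    rw [h1, h2, hbstep]
    simpa using hε

theorem CT2_coe_zero : (((0:ℝ)) : AddCircle (2:ℝ)) = 0 := by norm_num

include hcont hmono hper hge hfix hg in
theorem CT_g_reach_from_zero {ε : ℝ} (hε : 0 < ε) (b : AddCircle (2:ℝ)) :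
    ∃ n ≥ 1, ReachN g ε n 0 b := by
  obtain ⟨β, hβrep⟩ : ∃ x : ℝ, ((x:ℝ) : AddCircle (2:ℝ)) = b :=
    QuotientAddGroup.induction_on b fun x => ⟨x, rfl⟩
  by_cases hint : ∃ j : ℤ, β = (j:ℝ)
  · obtain ⟨j, rfl⟩ := hint
    set d : ℕ := (j % 2).toNat with hd
    have hdcast : ((d : ℤ)) = j % 2 := Int.toNat_of_nonneg (Int.emod_nonneg j (by norm_num))
    obtain ⟨n₁, hn₁, hchain⟩ := CT_march_to G hcont hmono hge hfix g hg 0 d hε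
    obtain ⟨t, ht⟩ : ∃ t : ℤ, ((0 + d : ℤ)) = j + 2 * t := ⟨(j % 2 - j) / 2, by omega⟩
    have hstart : ((((0:ℤ):ℝ) : ℝ) : AddCircle (2:ℝ)) = 0 := by
      rw [show (((0:ℤ):ℝ)) = (0:ℝ) by norm_num, CT2_coe_zero]
    have hend : ((((0 + d : ℤ):ℝ) : ℝ) : AddCircle (2:ℝ)) = (((j:ℝ) : ℝ) : AddCircle (2:ℝ)) := by
      apply CT2_coe_eq _ _ t
      rw [show (((0 + d : ℤ):ℝ)) = ((((0 + d : ℤ)):ℤ):ℝ) by norm_num]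
      rw [ht]
      push_cast
      ring
    rw [hstart, hend, hβrep] at hchain
    exact ⟨n₁, hn₁, hchain⟩
  · set k : ℤ := ⌊β⌋ with hk
    set m : ℕ := (k % 2).toNat with hm
    have hmcast : ((m : ℤ)) = k % 2 := Int.toNat_of_nonneg (Int.emod_nonneg k (by norm_num))
    obtain ⟨t, ht⟩ : ∃ t : ℤ, ((m : ℤ)) = k + 2 * t := ⟨(k % 2 - k) / 2, by omega⟩
    set β' : ℝ := β + 2 * (t:ℝ) with hβ'
    have hβ'int : ¬ ∃ j : ℤ, β' = (j:ℝ) := by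
      rintro ⟨i, hi⟩
      exact hint ⟨i - 2 * t, by push_cast; rw [hβ'] at hi; linarith⟩
    have hfl : ⌊β'⌋ = (m : ℤ) := by
      rw [hβ', show β + 2 * (t:ℝ) = β + ((2 * t : ℤ) : ℝ) by push_cast; ring,
        Int.floor_add_intCast, ← hk, ht]
    obtain ⟨n₁, hn₁, hchain1⟩ := CT_march_to G hcont hmono hge hfix g hg 0 m hε
    obtain ⟨n₂, hn₂, hchain2⟩ := CT_preorbit G hcont hmono hper hge hfix g hg β' hβ'int hε
    have hstart : ((((0:ℤ):ℝ) : ℝ) : AddCircle (2:ℝ)) = 0 := by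
      rw [show (((0:ℤ):ℝ)) = (0:ℝ) by norm_num, CT2_coe_zero]
    have hmid : ((((0 + m : ℤ):ℝ) : ℝ) : AddCircle (2:ℝ))
        = (((⌊β'⌋ : ℝ) : ℝ) : AddCircle (2:ℝ)) := by
      rw [hfl]; norm_num
    have hend : ((β' : ℝ) : AddCircle (2:ℝ)) = ((β : ℝ) : AddCircle (2:ℝ)) :=
      CT2_coe_eq _ _ t hβ'
    rw [hstart, hmid] at hchain1
    rw [hend, hβrep] at hchain2
    exact ⟨n₁ + n₂, by omega, reachN_trans hchain1 hchain2⟩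

end Gmap

/-- Let `A` be the toral automorphism induced by
`(m, n) ↦ (2m + n, m + n)`, let `G : ℝ → ℝ` be a continuous strictly increasing
lift with `G (x + 2) = G x + 2`, `G x ≥ x`, `G x = x` iff `x ∈ ℤ`, inducing the
circle map `g` on `ℝ/2ℤ`. Then the product map `F (x, a) = (A x, g a)` on
`(ℝ/ℤ)² × (ℝ/2ℤ)` is chain transitive. -/
theorem stmt13
    (A : AddCircle (1 : ℝ) × AddCircle (1 : ℝ) → AddCircle (1 : ℝ) × AddCircle (1 : ℝ))
    (hA : ∀ m n : ℝ, A (((m : ℝ) : AddCircle (1 : ℝ)), ((n : ℝ) : AddCircle (1 : ℝ))) =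
      (((2 * m + n : ℝ) : AddCircle (1 : ℝ)), ((m + n : ℝ) : AddCircle (1 : ℝ))))
    (G : ℝ → ℝ) (hcont : Continuous G) (hmono : StrictMono G)
    (hper : ∀ x : ℝ, G (x + 2) = G x + 2)
    (hge : ∀ x : ℝ, x ≤ G x)
    (hfix : ∀ x : ℝ, G x = x ↔ ∃ k : ℤ, x = (k : ℝ))
    (g : AddCircle (2 : ℝ) → AddCircle (2 : ℝ))
    (hg : ∀ x : ℝ, g ((x : ℝ) : AddCircle (2 : ℝ)) = ((G x : ℝ) : AddCircle (2 : ℝ)))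
    (F : (AddCircle (1 : ℝ) × AddCircle (1 : ℝ)) × AddCircle (2 : ℝ) →
      (AddCircle (1 : ℝ) × AddCircle (1 : ℝ)) × AddCircle (2 : ℝ))
    (hF : ∀ p, F p = (A p.1, g p.2)) :
    ChainTransitive F := by
  intro ε hε P Q
  obtain ⟨nA1, hnA1, hA1⟩ := CT_A_reach_zero A hA hε P.1
  obtain ⟨nA2, hnA2, hA2⟩ := CT_A_reach_from_zero A hA hε Q.1
  obtain ⟨ng1, hng1, hg1⟩ := CT_g_reach_zero G hcont hmono hge hfix g hg hε P.2
  obtain ⟨ng2, hng2, hg2⟩ := CT_g_reach_from_zero G hcont hmono hper hge hfix g hg hε Q.2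
  have hAfix : A 0 = 0 := CT_A_zero A hA
  have hgfix : g 0 = 0 := by
    have h := CT_g_fix G hfix g hg 0
    rw [show (((0:ℤ):ℝ)) = (0:ℝ) by norm_num, CT2_coe_zero] at h
    exact h
  have hApad : ReachN A ε (ng1 + ng2) 0 0 := reachN_fixed hAfix hε _
  have hgpad : ReachN g ε (nA1 + nA2) 0 0 := reachN_fixed hgfix hε _
  have hAchain : ReachN A ε (nA1 + (ng1 + ng2) + nA2) P.1 Q.1 :=
    reachN_trans (reachN_trans hA1 hApad) hA2
  have hgchain : ReachN g ε (ng1 + (nA1 + nA2) + ng2) P.2 Q.2 :=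
    reachN_trans (reachN_trans hg1 hgpad) hg2
  rw [show ng1 + (nA1 + nA2) + ng2 = nA1 + (ng1 + ng2) + nA2 by omega] at hgchain
  obtain ⟨c, hc0, hcN, hcs⟩ := hAchain
  obtain ⟨d, hd0, hdN, hds⟩ := hgchain
  refine ⟨nA1 + (ng1 + ng2) + nA2, by omega, fun i => (c i, d i), by simp [hc0, hd0],
    by simp [hcN, hdN], ?_⟩
  intro i hi
  rw [hF, Prod.dist_eq]
  exact max_lt (hcs i hi) (hds i hi)
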